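/- Suppose τ_1 = 0, ε ∈ [0,1], η > 0, E_t ∈ [0,1] for all t, and whenever τ_t ≥ 1 we have E_t = 0. Then the projected update τ_{t+1} = max{0, τ_t + η(E_t − ε)} satisfies τ_t ≤ 1 + η for all t ≥ 1. -/
import Mathlib

/-- Uniform upper bound `τ_t ≤ 1 + η` for the projected threshold update. -/
theorem projected_update_uniform_bound
    (η ε : ℝ) (hη : 0 < η) (hε0 : 0 ≤ ε) (hε1 : ε ≤ 1)
    (E τ : ℕ → ℝ)
    (hE : ∀ t, 0 ≤ E t ∧ E t ≤ 1)
    (hE0 : ∀ t, 1 ≤ τ t → E t = 0)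
    (hτ1 : τ 1 = 0)
    (hupd : ∀ t, τ (t + 1) = max 0 (τ t + η * (E t - ε))) :
    ∀ t, 1 ≤ t → τ t ≤ 1 + η := by
  intro t ht
  induction t with
  | zero => omega
  | succ n ih =>
    rcases Nat.eq_or_lt_of_le ht with h | h
    · rw [← h, hτ1]; nlinarith
    · have hn : 1 ≤ n := Nat.lt_succ_iff.mp h
      have hτn := ih hn
      rw [hupd n]
      rcases le_or_gt 1 (τ n) with h1 | h1
      · have := hE0 n h1
        rw [this]
        apply max_le (by nlinarith)
        nlinarith
      · apply max_le (by nlinarith)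
        have := (hE n).2
        nlinarith
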